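/- For all n ≥ 1 and r ≥ 0, p^r_1(n) = ∑_{s=1}^{n} C(n,s) · p^r_1(n−s) + r^n, where p^r_1(n) := ∑_{s=0}^{n} C(n,s) · J^0_s · r^{n−s}. -/

import Mathlib

/-- Stirling numbers of the second kind. -/
def stirling : ℕ → ℕ → ℕ
  | 0, 0 => 1
  | 0, _ + 1 => 0
  | _ + 1, 0 => 0
  | n + 1, s + 1 => (s + 1) * stirling n (s + 1) + stirling n s

/-- `J k n`: the number of barred preferential arrangements of an `n`-set with `k` bars,
given by its closed form `∑ S(n,s)·s!·C(k+s,s)`. -/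
def J (k n : ℕ) : ℕ :=
  ∑ s ∈ Finset.range (n + 1), stirling n s * s.factorial * (k + s).choose s

/-- `p k n`: barred preferential arrangements with `k` bars, one free section and
`k` restricted sections. -/
def p (k n : ℕ) : ℕ :=
  ∑ s ∈ Finset.range (n + 1), n.choose s * J 0 s * k ^ (n - s)

/-- Surjection numbers. -/
def sur (n s : ℕ) : ℕ := stirling n s * s.factorial

lemma stirling_eq_zero : ∀ n s, n < s → stirling n s = 0 := by
  intro n
  induction n with
  | zero => intro s hs; match s, hs with | s + 1, _ => rfl
  | succ n ih =>
    intro s hs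
    match s, hs with
    | s + 1, hs =>
      show (s + 1) * stirling n (s + 1) + stirling n s = 0
      rw [ih (s+1) (by omega), ih s (by omega)]; simp

lemma sur_eq_zero {n s : ℕ} (h : n < s) : sur n s = 0 := by
  simp [sur, stirling_eq_zero n s h]

lemma sur_succ (m s : ℕ) : sur (m + 1) s = s * sur m s + s * sur m (s - 1) := by
  cases s with
  | zero => simp [sur]; rfl
  | succ u =>
    show (((u+1) * stirling m (u+1) + stirling m u)) * (u+1).factorial = _
    simp only [sur, Nat.add_sub_cancel, Nat.factorial_succ]
    ring

lemma sur_rec (n : ℕ) : ∀ s : ℕ,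
    sur n (s + 1) = ∑ j ∈ Finset.range n, n.choose (j + 1) * sur (n - 1 - j) s := by
  induction n with
  | zero => intro s; simp [sur, show stirling 0 (s+1) = 0 from rfl]
  | succ n ih =>
    intro s
    have hstep : ∀ j ∈ Finset.range (n + 1),
        (n+1).choose (j+1) * sur (n + 1 - 1 - j) s
          = n.choose (j+1) * sur (n - j) s + n.choose j * sur (n - j) s := by
      intro j _
      have : (n+1).choose (j+1) = n.choose (j+1) + n.choose j := by
        rw [Nat.choose_succ_succ, Nat.add_comm]
      rw [this, Nat.add_mul]
      congr 2 <;> congr 1 <;> omega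
    rw [Finset.sum_congr rfl hstep, Finset.sum_add_distrib]
    have hA : ∑ j ∈ Finset.range (n + 1), n.choose (j+1) * sur (n - j) s
        = s * sur n (s + 1) + s * sur n s := by
      rw [Finset.sum_range_succ, Nat.choose_succ_self, Nat.zero_mul, Nat.add_zero]
      have h1 : ∀ j ∈ Finset.range n, n.choose (j+1) * sur (n - j) s
          = s * (n.choose (j+1) * sur (n - 1 - j) s)
            + s * (n.choose (j+1) * sur (n - 1 - j) (s - 1)) := by
        intro j hj
        simp only [Finset.mem_range] at hj
        have : n - j = (n - 1 - j) + 1 := by omega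
        rw [this, sur_succ]
        ring
      rw [Finset.sum_congr rfl h1, Finset.sum_add_distrib, ← Finset.mul_sum, ← Finset.mul_sum,
        ← ih s]
      congr 1
      cases s with
      | zero => simp
      | succ u => simp only [Nat.add_sub_cancel]; rw [← ih u]
    have hB : ∑ j ∈ Finset.range (n + 1), n.choose j * sur (n - j) s
        = sur n (s + 1) + sur n s := by
      rw [Finset.sum_range_succ']
      simp only [Nat.choose_zero_right, Nat.one_mul, Nat.sub_zero]
      congr 1
      rw [ih s]
      exact Finset.sum_congr rfl fun j _ => by congr 2; omega
    rw [hA, hB, sur_succ n (s + 1)]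
    simp only [Nat.add_sub_cancel]
    ring

lemma J0_eq (n : ℕ) : J 0 n = ∑ s ∈ Finset.range (n + 1), sur n s := by
  simp [J, sur]

lemma J0_rec (n : ℕ) :
    J 0 (n + 1) = ∑ j ∈ Finset.range (n + 1), (n + 1).choose (j + 1) * J 0 (n - j) := by
  rw [J0_eq, Finset.sum_range_succ']
  have h0 : sur (n + 1) 0 = 0 := by
    simp [sur, show stirling (n+1) 0 = 0 from rfl]
  rw [h0, Nat.add_zero]
  have h1 : ∀ s ∈ Finset.range (n + 1), sur (n + 1) (s + 1)
      = ∑ j ∈ Finset.range (n + 1), (n + 1).choose (j + 1) * sur (n - j) s := by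
    intro s _
    rw [sur_rec]
    exact Finset.sum_congr rfl fun j _ => by congr 2 <;> omega
  rw [Finset.sum_congr rfl h1, Finset.sum_comm]
  refine Finset.sum_congr rfl fun j hj => ?_
  simp only [Finset.mem_range] at hj
  rw [← Finset.mul_sum, J0_eq]
  congr 1
  refine (Finset.sum_subset (Finset.range_subset_range.mpr (by omega)) ?_).symm
  intro s _ hs
  simp only [Finset.mem_range, not_lt] at hs
  exact sur_eq_zero (by omega)

theorem stmt_15 (n r : ℕ) (hn : 1 ≤ n) :
    p r n = (∑ s ∈ Finset.Icc 1 n, n.choose s * p r (n - s)) + r ^ n := by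
  obtain ⟨m, rfl⟩ : ∃ m, n = m + 1 := ⟨n - 1, by omega⟩
  rw [p, Finset.sum_range_succ']
  simp only [Nat.choose_zero_right, Nat.one_mul, Nat.sub_zero]
  have hJ0 : J 0 0 = 1 := by rfl
  rw [hJ0, Nat.one_mul]
  congr 1
  -- rewrite RHS over range
  have hR : Finset.Icc 1 (m + 1) = Finset.Ico 1 (m + 2) := by exact (Finset.Ico_add_one_right_eq_Icc ..).symm
  rw [hR, Finset.sum_Ico_eq_sum_range]
  simp only [show m + 2 - 1 = m + 1 from rfl]
  -- expand J 0 (s+1) on LHS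
  have hL : ∀ s ∈ Finset.range (m + 1),
      (m+1).choose (s+1) * J 0 (s+1) * r ^ (m + 1 - (s + 1))
        = ∑ j ∈ Finset.range (s + 1),
            (m+1).choose (s+1) * ((s+1).choose (j+1) * J 0 (s - j)) * r ^ (m - s) := by
    intro s _
    rw [J0_rec s, Finset.mul_sum, Finset.sum_mul]
    exact Finset.sum_congr rfl fun j _ => by
      rw [show m + 1 - (s + 1) = m - s by omega]
  rw [Finset.sum_congr rfl hL]
  -- swap the triangular double sum
  have hswap := (Finset.sum_Ico_Ico_comm 0 (m + 1)
    (fun j s => (m+1).choose (s+1) * ((s+1).choose (j+1) * J 0 (s - j)) * r ^ (m - s))).symm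
  simp only [Nat.Ico_zero_eq_range] at hswap
  rw [hswap]
  refine Finset.sum_congr rfl fun j hj => ?_
  simp only [Finset.mem_range] at hj
  rw [Finset.sum_Ico_eq_sum_range]
  have hm : m + 1 - j = (m - j) + 1 := by omega
  have hp : m + 1 - (1 + j) = m - j := by omega
  rw [hm, hp, p, Finset.mul_sum]
  have hc : (m + 1).choose (1 + j) = (m + 1).choose (j + 1) := by rw [Nat.add_comm 1 j]
  refine Finset.sum_congr rfl fun t ht => ?_
  simp only [Finset.mem_range] at ht
  have hchoose : (m+1).choose (j + t + 1) * (j + t + 1).choose (j + 1)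
      = (m+1).choose (j + 1) * (m - j).choose t := by
    have := Nat.choose_mul (n := m + 1) (k := j + t + 1) (s := j + 1) (by omega)
    rw [this]
    congr 2 <;> omega
  have e1 : j + t + 1 = j + t + 1 := rfl
  calc (m+1).choose (j + t + 1) * ((j + t + 1).choose (j + 1) * J 0 (j + t - j))
        * r ^ (m - (j + t))
      = ((m+1).choose (j + t + 1) * (j + t + 1).choose (j + 1)) * J 0 t * r ^ (m - j - t) := by
        have h2 : j + t - j = t := by omega
        have h3 : m - (j + t) = m - j - t := by omega
        rw [h2, h3]; ring
    _ = (m + 1).choose (1 + j) * ((m - j).choose t * J 0 t * r ^ (m - j - t)) := by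
        rw [hchoose, hc]; ring
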